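/- A subline PG(1, q) of PG(1, q^3) intersects any F_q-linear set of PG(1, q^3) in 0, 1, 2, 3, or q+1 points. -/

import Mathlib

open Polynomial

/-- Determinant of `s • X + t • Y` for 3×3 matrices is a cubic form in `(s, t)`. -/
private lemma cubic_form {R : Type*} [CommRing R] (X Y : Matrix (Fin 3) (Fin 3) R) :
    ∃ c3 c2 c1 c0 : R, ∀ s t : R, (s • X + t • Y).det =
      c3 * s ^ 3 + c2 * (s ^ 2 * t) + c1 * (s * t ^ 2) + c0 * t ^ 3 := by
  refine ⟨X 0 0 * X 1 1 * X 2 2 - X 0 0 * X 1 2 * X 2 1 - X 0 1 * X 1 0 * X 2 2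
      + X 0 1 * X 1 2 * X 2 0 + X 0 2 * X 1 0 * X 2 1 - X 0 2 * X 1 1 * X 2 0,
    Y 0 0 * X 1 1 * X 2 2 - Y 0 0 * X 1 2 * X 2 1 - Y 0 1 * X 1 0 * X 2 2
      + Y 0 1 * X 1 2 * X 2 0 + Y 0 2 * X 1 0 * X 2 1 - Y 0 2 * X 1 1 * X 2 0
      + X 0 0 * Y 1 1 * X 2 2 - X 0 0 * Y 1 2 * X 2 1 - X 0 1 * Y 1 0 * X 2 2
      + X 0 1 * Y 1 2 * X 2 0 + X 0 2 * Y 1 0 * X 2 1 - X 0 2 * Y 1 1 * X 2 0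
      + X 0 0 * X 1 1 * Y 2 2 - X 0 0 * X 1 2 * Y 2 1 - X 0 1 * X 1 0 * Y 2 2
      + X 0 1 * X 1 2 * Y 2 0 + X 0 2 * X 1 0 * Y 2 1 - X 0 2 * X 1 1 * Y 2 0,
    Y 0 0 * Y 1 1 * X 2 2 - Y 0 0 * Y 1 2 * X 2 1 - Y 0 1 * Y 1 0 * X 2 2
      + Y 0 1 * Y 1 2 * X 2 0 + Y 0 2 * Y 1 0 * X 2 1 - Y 0 2 * Y 1 1 * X 2 0
      + Y 0 0 * X 1 1 * Y 2 2 - Y 0 0 * X 1 2 * Y 2 1 - Y 0 1 * X 1 0 * Y 2 2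
      + Y 0 1 * X 1 2 * Y 2 0 + Y 0 2 * X 1 0 * Y 2 1 - Y 0 2 * X 1 1 * Y 2 0
      + X 0 0 * Y 1 1 * Y 2 2 - X 0 0 * Y 1 2 * Y 2 1 - X 0 1 * Y 1 0 * Y 2 2
      + X 0 1 * Y 1 2 * Y 2 0 + X 0 2 * Y 1 0 * Y 2 1 - X 0 2 * Y 1 1 * Y 2 0,
    Y 0 0 * Y 1 1 * Y 2 2 - Y 0 0 * Y 1 2 * Y 2 1 - Y 0 1 * Y 1 0 * Y 2 2
      + Y 0 1 * Y 1 2 * Y 2 0 + Y 0 2 * Y 1 0 * Y 2 1 - Y 0 2 * Y 1 1 * Y 2 0,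
    fun s t => ?_⟩
  simp only [Matrix.det_fin_three, Matrix.add_apply, Matrix.smul_apply, smul_eq_mul]
  ring

/-- If an endomorphism of a finite-dimensional space has nontrivial kernel, its
determinant vanishes. -/
private lemma det_eq_zero_of_ker_ne_bot {F M : Type*} [Field F] [AddCommGroup M] [Module F M]
    [FiniteDimensional F M] (f : M →ₗ[F] M) (h : LinearMap.ker f ≠ ⊥) :
    LinearMap.det f = 0 := by
  classical
  by_contra hd
  apply h
  rw [← LinearMap.isUnit_iff_ker_eq_bot]
  let b := Module.finBasis F M
  have hA : IsUnit (LinearMap.toMatrixAlgEquiv b f) := by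
    rw [Matrix.isUnit_iff_isUnit_det, isUnit_iff_ne_zero]
    have heq : (LinearMap.toMatrixAlgEquiv b f).det = LinearMap.det f := by
      have : LinearMap.toMatrixAlgEquiv b f = LinearMap.toMatrix b b f := rfl
      rw [this, LinearMap.det_toMatrix]
    rwa [heq]
  have := hA.map (LinearMap.toMatrixAlgEquiv b).symm
  rwa [AlgEquiv.symm_apply_apply] at this

private lemma card_le_roots {F : Type*} [Field F] [Fintype F] (P : F[X]) (hP : P ≠ 0)
    (Me : F → Prop) (h : ∀ s, Me s → P.eval s = 0) :
    Nat.card {s : F // Me s} ≤ P.natDegree := by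
  classical
  have hinj : Function.Injective (fun z : {s : F // Me s} =>
      (⟨z.1, by simp [Multiset.mem_toFinset, Polynomial.mem_roots', hP,
          Polynomial.IsRoot.def, h z.1 z.2]⟩ : {a : F // a ∈ P.roots.toFinset})) := by
    intro a b hab
    have h' := congrArg Subtype.val hab
    simp only at h'
    exact Subtype.ext h'
  calc Nat.card {s : F // Me s} ≤ Nat.card {a : F // a ∈ P.roots.toFinset} :=
        Nat.card_le_card_of_injective _ hinj
    _ = P.roots.toFinset.card := by rw [Nat.card_eq_fintype_card, Fintype.card_coe]
    _ ≤ Multiset.card P.roots := P.roots.toFinset_card_le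
    _ ≤ P.natDegree := P.card_roots'

private lemma roots3 {F : Type*} [Field F] [Fintype F] (c3 c2 c1 c0 : F)
    (hne : ¬(c3 = 0 ∧ c2 = 0 ∧ c1 = 0 ∧ c0 = 0)) (Me : Option F → Prop)
    (h1 : ∀ s : F, Me (some s) → c3 * s ^ 3 + c2 * s ^ 2 + c1 * s + c0 = 0)
    (h2 : Me none → c3 = 0) :
    Nat.card {x : Option F // Me x} ≤ 3 := by
  classical
  set P : F[X] := C c3 * X ^ 3 + C c2 * X ^ 2 + C c1 * X + C c0 with hPdef
  have heval : ∀ s : F, P.eval s = c3 * s ^ 3 + c2 * s ^ 2 + c1 * s + c0 := by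
    intro s; simp [hPdef]
  have hPne : P ≠ 0 := by
    intro h0
    apply hne
    have hc : ∀ k, P.coeff k = 0 := fun k => by rw [h0]; simp
    have e3 := hc 3; have e2 := hc 2; have e1 := hc 1; have e0 := hc 0
    simp [hPdef, coeff_X_pow, coeff_C, coeff_X] at e3 e2 e1 e0
    exact ⟨e3, e2, e1, e0⟩
  have hsome : ∀ s, Me (some s) → P.eval s = 0 := fun s hs => by
    rw [heval]; exact h1 s hs
  by_cases hc3 : c3 = 0
  · have hdeg : P.natDegree ≤ 2 := by
      rw [hPdef, hc3]
      simp only [map_zero, zero_mul, zero_add]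
      compute_degree
    have hn : Nat.card {s : F // Me (some s)} ≤ 2 :=
      le_trans (card_le_roots P hPne _ hsome) hdeg
    let j : {x : Option F // Me x} → Option {s : F // Me (some s)} := fun z =>
      match z with
      | ⟨some s, h⟩ => some ⟨s, h⟩
      | ⟨none, _⟩ => none
    have hj : Function.Injective j := by
      rintro ⟨(_ | a), ha⟩ ⟨(_ | b), hb⟩ h <;> simp_all [j]
    calc Nat.card {x : Option F // Me x} ≤ Nat.card (Option {s : F // Me (some s)}) :=
          Nat.card_le_card_of_injective j hj
      _ = Nat.card {s : F // Me (some s)} + 1 := by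
          rw [Nat.card_eq_fintype_card, Nat.card_eq_fintype_card, Fintype.card_option]
      _ ≤ 3 := by omega
  · have h2' : ¬ Me none := fun h => hc3 (h2 h)
    have hdeg : P.natDegree ≤ 3 := by
      rw [hPdef]; compute_degree
    let j : {x : Option F // Me x} → {s : F // Me (some s)} := fun z =>
      match z with
      | ⟨some s, h⟩ => ⟨s, h⟩
      | ⟨none, h⟩ => absurd h h2'
    have hj : Function.Injective j := by
      rintro ⟨(_ | a), ha⟩ ⟨(_ | b), hb⟩ h
      · exact absurd ha h2'
      · exact absurd ha h2'
      · exact absurd hb h2'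
      · simp_all [j]
    calc Nat.card {x : Option F // Me x} ≤ Nat.card {s : F // Me (some s)} :=
          Nat.card_le_card_of_injective j hj
      _ ≤ 3 := le_trans (card_le_roots P hPne _ hsome) hdeg

private lemma core {F M Q : Type*} [Field F] [Fintype F] [AddCommGroup M] [Module F M]
    [AddCommGroup Q] [Module F Q] [Module.Finite F M] [Module.Finite F Q]
    (hM : Module.finrank F M = 3) (T₁ T₂ : M →ₗ[F] Q)
    (tm : Option F → (M →ₗ[F] Q)) (htms : ∀ s, tm (some s) = s • T₁ + T₂)
    (htmn : tm none = T₁) :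
    (∀ x, LinearMap.ker (tm x) ≠ ⊥) ∨
      Nat.card {x : Option F // LinearMap.ker (tm x) ≠ ⊥} ≤ 3 := by
  classical
  by_cases hdeg : ∀ (ρ : Q →ₗ[F] M) (s t : F), LinearMap.det (ρ ∘ₗ (s • T₁ + t • T₂)) = 0
  · left
    intro x hker
    obtain ⟨ρ, hρ⟩ := (tm x).exists_leftInverse_of_injective hker
    have h1 : LinearMap.det (ρ ∘ₗ tm x) = 1 := by rw [hρ]; exact LinearMap.det_id
    cases x with
    | some s =>
        have h0 := hdeg ρ s 1
        rw [one_smul, ← htms s, h1] at h0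
        exact one_ne_zero h0
    | none =>
        have h0 := hdeg ρ 1 0
        rw [one_smul, zero_smul, add_zero, ← htmn, h1] at h0
        exact one_ne_zero h0
  · right
    push_neg at hdeg
    obtain ⟨ρ, s₀, t₀, h₀⟩ := hdeg
    set b : Module.Basis (Fin 3) F M := Module.finBasisOfFinrankEq F M hM with hb
    set Xm := LinearMap.toMatrix b b (ρ ∘ₗ T₁) with hXm
    set Ym := LinearMap.toMatrix b b (ρ ∘ₗ T₂) with hYm
    have hkey : ∀ s t : F, LinearMap.det (ρ ∘ₗ (s • T₁ + t • T₂)) = (s • Xm + t • Ym).det := by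
      intro s t
      rw [← LinearMap.det_toMatrix b]
      congr 1
      have hcomp : ρ ∘ₗ (s • T₁ + t • T₂) = s • (ρ ∘ₗ T₁) + t • (ρ ∘ₗ T₂) := by
        ext m; simp
      rw [hcomp, map_add, map_smul, map_smul]
    obtain ⟨c3, c2, c1, c0, hc⟩ := cubic_form Xm Ym
    have hne : ¬(c3 = 0 ∧ c2 = 0 ∧ c1 = 0 ∧ c0 = 0) := by
      rintro ⟨e3, e2, e1, e0⟩
      apply h₀
      rw [hkey, hc, e3, e2, e1, e0]; ring
    have hzero : ∀ s t : F, LinearMap.ker (s • T₁ + t • T₂) ≠ ⊥ →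
        c3 * s ^ 3 + c2 * (s ^ 2 * t) + c1 * (s * t ^ 2) + c0 * t ^ 3 = 0 := by
      intro s t hker
      rw [← hc, ← hkey]
      apply det_eq_zero_of_ker_ne_bot
      intro hbot
      apply hker
      rw [eq_bot_iff, ← hbot]
      exact LinearMap.ker_le_ker_comp _ _
    refine roots3 c3 c2 c1 c0 hne _ (fun s hs => ?_) (fun h => ?_)
    · have := hzero s 1 (by rwa [one_smul, ← htms])
      simpa using this
    · have := hzero 1 0 (by rwa [one_smul, zero_smul, add_zero, ← htmn])
      simpa using this

/-- A subline PG(1, q) of PG(1, q^3) (a PGL(2, q^3)-image of the canonical subline over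
the subfield F of order q) meets any F_q-linear set of PG(1, q^3) in 0, 1, 2, 3 or
q + 1 points. -/
theorem stmt_11 (q : ℕ) (F K : Type*) [Field F] [Fintype F] [Field K] [Fintype K]
    [Algebra F K] (hF : Fintype.card F = q) (hK : Fintype.card K = q ^ 3)
    (g : (Fin 2 → K) ≃ₗ[K] (Fin 2 → K)) (U : Submodule F (Fin 2 → K)) :
    Nat.card {P : Submodule K (Fin 2 → K) //
        (∃ v : Fin 2 → F, v ≠ 0 ∧
          P = Submodule.span K {g (fun i => algebraMap F K (v i))}) ∧
        P.restrictScalars F ⊓ U ≠ ⊥}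
      ∈ ({0, 1, 2, 3, q + 1} : Set ℕ) := by
  classical
  have hq2 : 2 ≤ q := hF ▸ Fintype.one_lt_card
  have hMFK : Module.Finite F K := (Module.finite_iff_finite (R := F)).mpr inferInstance
  have hfin3 : Module.finrank F K = 3 := by
    have h3 : q ^ 3 = q ^ Module.finrank F K := by
      rw [← hK, ← hF]; exact Module.card_eq_pow_finrank (K := F) (V := K)
    exact (Nat.pow_right_injective hq2 h3).symm
  -- the comap of the linear set under `g`
  set U' : Submodule F (Fin 2 → K) :=
    U.comap (LinearEquiv.restrictScalars F g).toLinearMap with hU'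
  -- parametrization of the subline by `Option F`
  set vec : Option F → (Fin 2 → F) := fun x => x.elim ![1, 0] (fun s => ![s, 1]) with hvec
  set w : Option F → (Fin 2 → K) := fun x => (fun i => algebraMap F K (vec x i)) with hw
  have hvecne : ∀ x, vec x ≠ 0 := by
    rintro (_ | s) h
    · have := congrFun h 0; simp [hvec] at this
    · have := congrFun h 1; simp [hvec] at this
  have hwne : ∀ x, w x ≠ 0 := by
    rintro (_ | s) h
    · have := congrFun h 0; simp [hw, hvec] at this
    · have := congrFun h 1; simp [hw, hvec] at this
  have hgw : ∀ (l : K) (x : Option F),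
      (LinearEquiv.restrictScalars F g).toLinearMap (l • w x) = l • g (w x) := by
    intro l x
    simp only [LinearEquiv.coe_coe, LinearEquiv.restrictScalars_apply, map_smul]
  -- the intersection condition, in terms of `U'`
  have hmeet : ∀ x : Option F,
      ((Submodule.span K {g (w x)}).restrictScalars F ⊓ U ≠ ⊥ ↔
        ∃ l : K, l ≠ 0 ∧ l • (w x) ∈ U') := by
    intro x
    rw [Submodule.ne_bot_iff]
    constructor
    · rintro ⟨z, hz, hz0⟩
      rw [Submodule.mem_inf] at hz
      obtain ⟨hz1, hz2⟩ := hz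
      rw [Submodule.restrictScalars_mem, Submodule.mem_span_singleton] at hz1
      obtain ⟨l, rfl⟩ := hz1
      refine ⟨l, ?_, ?_⟩
      · rintro rfl; simp at hz0
      · rw [hU', Submodule.mem_comap, hgw]
        exact hz2
    · rintro ⟨l, hl, hlU⟩
      refine ⟨l • g (w x), ?_, ?_⟩
      · rw [Submodule.mem_inf]
        refine ⟨?_, ?_⟩
        · rw [Submodule.restrictScalars_mem]
          exact Submodule.smul_mem _ l (Submodule.mem_span_singleton_self _)
        · rw [hU', Submodule.mem_comap, hgw] at hlU
          exact hlU
      · exact smul_ne_zero hl (fun h => hwne x (g.map_eq_zero_iff.mp h))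
  -- setting up the linear maps to the quotient
  have hMF2 : Module.Finite F (Fin 2 → K) :=
    (Module.finite_iff_finite (R := F)).mpr inferInstance
  have hMQ : Module.Finite F ((Fin 2 → K) ⧸ U') :=
    Module.Finite.of_surjective U'.mkQ (Submodule.mkQ_surjective U')
  let inj0 : K →ₗ[F] (Fin 2 → K) :=
    { toFun := fun a => ![a, 0]
      map_add' := by intro a b; funext i; fin_cases i <;> simp
      map_smul' := by intro c a; funext i; fin_cases i <;> simp }
  let inj1 : K →ₗ[F] (Fin 2 → K) :=
    { toFun := fun a => ![0, a]
      map_add' := by intro a b; funext i; fin_cases i <;> simp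
      map_smul' := by intro c a; funext i; fin_cases i <;> simp }
  set T₁ : K →ₗ[F] ((Fin 2 → K) ⧸ U') := U'.mkQ ∘ₗ inj0 with hT₁
  set T₂ : K →ₗ[F] ((Fin 2 → K) ⧸ U') := U'.mkQ ∘ₗ inj1 with hT₂
  set tm : Option F → (K →ₗ[F] ((Fin 2 → K) ⧸ U')) :=
    fun x => x.elim T₁ (fun s => s • T₁ + T₂) with htm
  have hval : ∀ (x : Option F) (l : K), tm x l = U'.mkQ (l • w x) := by
    intro x l
    cases x with
    | none =>
        have e : l • w none = ![l, 0] := by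
          funext i; fin_cases i <;> simp [hw, hvec]
        simp only [htm, Option.elim, hT₁]
        rw [e]
        rfl
    | some s =>
        have e : l • w (some s) = s • ![l, (0 : K)] + ![(0 : K), l] := by
          funext i
          fin_cases i <;> simp [hw, hvec, Algebra.smul_def, mul_comm]
        simp only [htm, Option.elim, hT₁, hT₂]
        rw [e, map_add, map_smul]
        rfl
  have hker : ∀ x : Option F,
      (LinearMap.ker (tm x) ≠ ⊥ ↔ ∃ l : K, l ≠ 0 ∧ l • (w x) ∈ U') := by
    intro x
    rw [Submodule.ne_bot_iff]
    constructor
    · rintro ⟨l, hl, hl0⟩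
      rw [LinearMap.mem_ker, hval x l, Submodule.mkQ_apply,
        Submodule.Quotient.mk_eq_zero] at hl
      exact ⟨l, hl0, hl⟩
    · rintro ⟨l, hl0, hl⟩
      refine ⟨l, ?_, hl0⟩
      rw [LinearMap.mem_ker, hval x l, Submodule.mkQ_apply, Submodule.Quotient.mk_eq_zero]
      exact hl
  -- the bijection with the statement's subtype
  have hspan_inj : ∀ x x' : Option F,
      Submodule.span K {g (w x)} = Submodule.span K {g (w x')} → x = x' := by
    intro x x' hsp
    have h1 : g (w x') ∈ Submodule.span K {g (w x)} :=
      hsp ▸ Submodule.mem_span_singleton_self _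
    rw [Submodule.mem_span_singleton] at h1
    obtain ⟨c, hc⟩ := h1
    have hc' : c • w x = w x' := g.injective (by rw [map_smul, hc])
    cases x with
    | some s =>
        cases x' with
        | some s' =>
            have e1 := congrFun hc' 1
            have e0 := congrFun hc' 0
            simp [hw, hvec, smul_eq_mul] at e1 e0
            rw [e1] at e0
            simp at e0
            rw [e0]
        | none =>
            have e1 := congrFun hc' 1
            have e0 := congrFun hc' 0
            simp [hw, hvec, smul_eq_mul] at e1 e0
            rw [e1] at e0
            simp at e0
    | none =>
        cases x' with
        | some s' =>
            have e1 := congrFun hc' 1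
            simp [hw, hvec, smul_eq_mul] at e1
        | none => rfl
  have hscale : ∀ (v : Fin 2 → F), v ≠ 0 → ∃ x : Option F,
      Submodule.span K {g (fun i => algebraMap F K (v i))} =
        Submodule.span K {g (w x)} := by
    intro v hv
    by_cases hv1 : v 1 = 0
    · have hv0 : v 0 ≠ 0 := by
        intro h0
        apply hv
        funext i; fin_cases i <;> simp [h0, hv1]
      refine ⟨none, ?_⟩
      have e : (fun i => algebraMap F K (v i)) = algebraMap F K (v 0) • w none := by
        funext i; fin_cases i <;> simp [hw, hvec, hv1, Algebra.smul_def]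
      have hu : IsUnit (algebraMap F K (v 0)) := by
        rw [isUnit_iff_ne_zero]
        intro h
        exact hv0 ((algebraMap F K).injective (by rw [h, map_zero]))
      rw [e, map_smul, Submodule.span_singleton_smul_eq hu]
    · refine ⟨some (v 0 / v 1), ?_⟩
      have e : (fun i => algebraMap F K (v i)) = algebraMap F K (v 1) • w (some (v 0 / v 1)) := by
        funext i
        fin_cases i
        · simp only [hw, hvec, Option.elim]
          show algebraMap F K (v 0) = algebraMap F K (v 1) • algebraMap F K (![v 0 / v 1, 1] 0)
          rw [Matrix.cons_val_zero, smul_eq_mul, ← map_mul, mul_div_cancel₀ _ hv1]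
        · simp only [hw, hvec, Option.elim]
          show algebraMap F K (v 1) = algebraMap F K (v 1) • algebraMap F K (![v 0 / v 1, 1] 1)
          simp
      have hu : IsUnit (algebraMap F K (v 1)) := by
        rw [isUnit_iff_ne_zero]
        intro h
        exact hv1 ((algebraMap F K).injective (by rw [h, map_zero]))
      rw [e, map_smul, Submodule.span_singleton_smul_eq hu]
  have hbij : Nat.card {P : Submodule K (Fin 2 → K) //
        (∃ v : Fin 2 → F, v ≠ 0 ∧
          P = Submodule.span K {g (fun i => algebraMap F K (v i))}) ∧
        P.restrictScalars F ⊓ U ≠ ⊥}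
      = Nat.card {x : Option F //
          (Submodule.span K {g (w x)}).restrictScalars F ⊓ U ≠ ⊥} := by
    refine (Nat.card_eq_of_bijective
      (fun z => ⟨Submodule.span K {g (w z.1)},
        ⟨⟨vec z.1, hvecne z.1, by simp only [hw]⟩, z.2⟩⟩) ⟨?_, ?_⟩).symm
    · intro z z' h
      apply Subtype.ext
      have h2 := congrArg Subtype.val h
      simp only at h2
      exact hspan_inj z.1 z'.1 h2
    · rintro ⟨P, ⟨⟨v, hv, hP⟩, hPU⟩⟩
      obtain ⟨x, hxeq⟩ := hscale v hv
      refine ⟨⟨x, ?_⟩, ?_⟩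
      · rw [← hxeq, ← hP]
        exact hPU
      · apply Subtype.ext
        exact (hP.trans hxeq).symm
  have hcount : Nat.card {x : Option F //
        (Submodule.span K {g (w x)}).restrictScalars F ⊓ U ≠ ⊥}
      = Nat.card {x : Option F // LinearMap.ker (tm x) ≠ ⊥} :=
    Nat.card_congr (Equiv.subtypeEquivRight (fun x => (hmeet x).trans (hker x).symm))
  have hcore := core hfin3 T₁ T₂ tm (fun s => rfl) rfl
  rcases hcore with hall | hle
  · have hallP : ∀ x : Option F,
        (Submodule.span K {g (w x)}).restrictScalars F ⊓ U ≠ ⊥ :=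
      fun x => (hmeet x).mpr ((hker x).mp (hall x))
    have hcardall : Nat.card {x : Option F //
        (Submodule.span K {g (w x)}).restrictScalars F ⊓ U ≠ ⊥} = q + 1 := by
      rw [Nat.card_congr (Equiv.subtypeUnivEquiv hallP), Nat.card_eq_fintype_card,
        Fintype.card_option, hF]
    rw [hbij, hcardall]
    simp
  · rw [hbij, hcount]
    simp only [Set.mem_insert_iff, Set.mem_singleton_iff]
    revert hle
    generalize Nat.card {x : Option F // LinearMap.ker (tm x) ≠ ⊥} = n
    intro hle
    clear * - hle
    omega
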